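/- Let σ = (s_{i,j}) be an N×N symmetric shift matrix with minimal admissible shape μ = (μ_1, …, μ_n) (so σ ≠ 0 and n ≥ 2), and define the matrix σ̇ = (ṡ_{i,j}) by ṡ_{i,j} := s_{i,j} − 1 if exactly one of i, j exceeds N − μ_n (i.e., i ≤ N − μ_n < j or j ≤ N − μ_n < i), and ṡ_{i,j} := s_{i,j} otherwise. Then σ̇ is again a symmetric shift matrix with nonnegative entries, and μ is an admissible shape for σ̇. -/
import Mathlib


/-- The partial sum `μ_(a-1) = μ 1 + ⋯ + μ (a-1)` of a composition. -/
def blockStart {m : ℕ} (μ : Fin m → ℕ) (a : Fin m) : ℕ :=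
  ∑ b ∈ Finset.univ.filter (fun b => b < a), μ b

/-- The shift matrix condition `s i j + s j k = s i k` whenever
`|i-j| + |j-k| = |i-k|`. -/
def IsShiftMat {N : ℕ} {α : Type*} [Add α] (s : Fin N → Fin N → α) : Prop :=
  ∀ i j k : Fin N,
    |((i : ℕ) : ℤ) - ((j : ℕ) : ℤ)| + |((j : ℕ) : ℤ) - ((k : ℕ) : ℤ)| =
      |((i : ℕ) : ℤ) - ((k : ℕ) : ℤ)| →
    s i j + s j k = s i k

/-- Admissibility of a shape `μ` for a matrix `s`: entries vanish whenever both
indices lie in the same `μ`-block. -/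
def IsAdmissibleShape {N m : ℕ} {α : Type*} [Zero α]
    (s : Fin N → Fin N → α) (μ : Fin m → ℕ) : Prop :=
  ∀ a : Fin m, ∀ i j : Fin N,
    blockStart μ a ≤ (i : ℕ) → (i : ℕ) < blockStart μ a + μ a →
    blockStart μ a ≤ (j : ℕ) → (j : ℕ) < blockStart μ a + μ a →
    s i j = 0

lemma abs3 (x y z : ℕ) (h1 : x ≤ y) (h2 : y ≤ z) :
    |((x:ℕ):ℤ) - ((y:ℕ):ℤ)| + |((y:ℕ):ℤ) - ((z:ℕ):ℤ)| = |((x:ℕ):ℤ) - ((z:ℕ):ℤ)| := by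
  rw [abs_of_nonpos (by omega), abs_of_nonpos (by omega), abs_of_nonpos (by omega)]; ring

lemma between_of_abs (x y z : ℕ)
    (h : |((x:ℕ):ℤ) - ((y:ℕ):ℤ)| + |((y:ℕ):ℤ) - ((z:ℕ):ℤ)| = |((x:ℕ):ℤ) - ((z:ℕ):ℤ)|) :
    (x ≤ y ∧ y ≤ z) ∨ (z ≤ y ∧ y ≤ x) := by
  rcases abs_cases ((x:ℤ) - (y:ℤ)) with ⟨e1,f1⟩|⟨e1,f1⟩ <;>
  rcases abs_cases ((y:ℤ) - (z:ℤ)) with ⟨e2,f2⟩|⟨e2,f2⟩ <;>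
  rcases abs_cases ((x:ℤ) - (z:ℤ)) with ⟨e3,f3⟩|⟨e3,f3⟩ <;> omega

lemma blockStart_eq_sum_ite {M : ℕ} (μ : Fin M → ℕ) (a : Fin M) :
    blockStart μ a = ∑ b, if b < a then μ b else 0 := by
  rw [blockStart, Finset.sum_filter]

lemma blockStart_succ {M : ℕ} (μ : Fin M → ℕ) (p q : Fin M) (h : (q:ℕ) = (p:ℕ) + 1) :
    blockStart μ q = blockStart μ p + μ p := by
  rw [blockStart, blockStart]
  have he : Finset.univ.filter (fun b => b < q) = insert p (Finset.univ.filter (fun b => b < p)) := by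
    ext b
    simp only [Finset.mem_filter, Finset.mem_univ, true_and, Finset.mem_insert, Fin.lt_def,
      Fin.ext_iff]
    omega
  rw [he, Finset.sum_insert (by simp)]
  omega

lemma blockStart_add_le {M : ℕ} (μ : Fin M → ℕ) (a b : Fin M) (h : a < b) :
    blockStart μ a + μ a ≤ blockStart μ b := by
  have hsub : insert a (Finset.univ.filter (fun c => c < a)) ⊆ Finset.univ.filter (fun c => c < b) := by
    intro c hc
    simp only [Finset.mem_insert, Finset.mem_filter, Finset.mem_univ, true_and] at hc ⊢
    rcases hc with rfl | hc
    · exact h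
    · exact hc.trans h
  calc blockStart μ a + μ a = ∑ c ∈ insert a (Finset.univ.filter (fun c => c < a)), μ c := by
        rw [Finset.sum_insert (by simp), blockStart]; omega
    _ ≤ _ := Finset.sum_le_sum_of_subset hsub

lemma blockStart_last {M : ℕ} (μ : Fin (M+1) → ℕ) :
    blockStart μ (Fin.last M) + μ (Fin.last M) = ∑ a, μ a := by
  have h1 : insert (Fin.last M) (Finset.univ.filter (fun c => c < Fin.last M)) = Finset.univ := by
    ext c
    simp only [Finset.mem_insert, Finset.mem_filter, Finset.mem_univ, true_and, iff_true,
      Fin.lt_def, Fin.ext_iff, Fin.val_last]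
    omega
  conv_rhs => rw [← h1]
  rw [Finset.sum_insert (by simp), blockStart]
  omega


/-- given a nonzero symmetric shift matrix `s` with minimal
admissible shape `μ = (μ_1, …, μ_{m+1})`, the matrix `σ̇` obtained by
subtracting 1 from the entries `s i j` with exactly one of `i, j` exceeding
`N - μ_n` is again a symmetric shift matrix with nonnegative entries, and `μ`
is admissible for it. -/
theorem stmt4 (n m : ℕ) (s : Fin (n + 1) → Fin (n + 1) → ℕ)
    (hshift : IsShiftMat s)
    (hsymm : ∀ i j, s i j = s j i)
    (hne : ∃ i j, s i j ≠ 0)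
    (μ : Fin (m + 1) → ℕ)
    (hpos : ∀ a, 0 < μ a) (hsum : ∑ a, μ a = n + 1)
    (hadm : IsAdmissibleShape s μ)
    (hmin : ∀ (m' : ℕ) (ν : Fin m' → ℕ), (∀ a, 0 < ν a) → (∑ a, ν a = n + 1) →
      IsAdmissibleShape s ν → m + 1 ≤ m')
    (ds : Fin (n + 1) → Fin (n + 1) → ℤ)
    (hds : ∀ i j, ds i j = (s i j : ℤ) -
      (if ((i : ℕ) < n + 1 - μ (Fin.last m) ∧ n + 1 - μ (Fin.last m) ≤ (j : ℕ)) ∨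
          ((j : ℕ) < n + 1 - μ (Fin.last m) ∧ n + 1 - μ (Fin.last m) ≤ (i : ℕ))
        then 1 else 0)) :
    (∀ i j, 0 ≤ ds i j) ∧
    IsShiftMat ds ∧
    (∀ i j, ds i j = ds j i) ∧
    IsAdmissibleShape ds μ := by
  -- basic consequences of the shift property
  have chain : ∀ i j k : Fin (n+1), (i:ℕ) ≤ (j:ℕ) → (j:ℕ) ≤ (k:ℕ) → s i j + s j k = s i k :=
    fun i j k h1 h2 => hshift i j k (abs3 _ _ _ h1 h2)
  -- dispose of the case m = 0
  rcases m with _ | m'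
  · exfalso
    obtain ⟨i, j, hij⟩ := hne
    apply hij
    have h0 : blockStart μ 0 = 0 := by
      rw [blockStart]
      have : Finset.univ.filter (fun b => b < (0 : Fin 1)) = ∅ := by
        ext b; simp [Fin.lt_def]
      rw [this, Finset.sum_empty]
    have hμ0 : μ 0 = n + 1 := by
      rw [← hsum]; simp
    exact hadm 0 i j (by omega) (by omega) (by omega) (by omega)
  -- now m = m' + 1, so there are at least two blocks
  obtain ⟨K, hK⟩ : ∃ K, K = n + 1 - μ (Fin.last (m' + 1)) := ⟨_, rfl⟩
  simp only [← hK] at hds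
  have hbl := blockStart_last μ
  rw [hsum] at hbl
  have hlastK : blockStart μ (Fin.last (m' + 1)) = K := by omega
  obtain ⟨p, hpval⟩ : ∃ p : Fin (m' + 2), (p : ℕ) = m' := ⟨⟨m', by omega⟩, rfl⟩
  have hplt : p < Fin.last (m' + 1) := by rw [Fin.lt_def, Fin.val_last]; omega
  have hpsucc : blockStart μ (Fin.last (m' + 1)) = blockStart μ p + μ p :=
    blockStart_succ μ p (Fin.last (m' + 1)) (by rw [Fin.val_last]; omega)
  have hBK : blockStart μ p + μ p = K := by omega
  have hKpos : 1 ≤ K := by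
    have := blockStart_add_le μ 0 (Fin.last (m' + 1)) (by simp [Fin.lt_def])
    have := hpos 0
    omega
  -- KEY: minimality forces s i j ≥ 1 across the last block boundary
  have key : ∀ i j : Fin (n + 1), (i : ℕ) < K → K ≤ (j : ℕ) → 1 ≤ s i j := by
    intro i0 j0 hi0 hj0
    by_contra hcon
    have hs0 : s i0 j0 = 0 := by omega
    have hKn : K ≤ n := by have := j0.isLt; omega
    obtain ⟨P, hPval⟩ : ∃ P : Fin (n + 1), (P : ℕ) = K - 1 := ⟨⟨K - 1, by omega⟩, rfl⟩
    obtain ⟨Q, hQval⟩ : ∃ Q : Fin (n + 1), (Q : ℕ) = K := ⟨⟨K, by omega⟩, rfl⟩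
    have hPQ : s P Q = 0 := by
      have h1 := chain i0 P j0 (by omega) (by omega)
      have h2 := chain P Q j0 (by omega) (by omega)
      omega
    -- merge the last two blocks
    obtain ⟨ν, hν⟩ : ∃ ν : Fin (m' + 1) → ℕ,
        ∀ a, ν a = μ a.castSucc + if (a : ℕ) = m' then μ (Fin.last (m' + 1)) else 0 :=
      ⟨_, fun a => rfl⟩
    have hνpos : ∀ a, 0 < ν a := by
      intro a; have := hpos a.castSucc; rw [hν]; split_ifs <;> omega
    have hνsum : ∑ a, ν a = n + 1 := by
      simp only [hν]
      rw [Finset.sum_add_distrib]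
      have h1 : ∑ a : Fin (m' + 1), μ a.castSucc = (∑ a, μ a) - μ (Fin.last (m' + 1)) := by
        rw [Fin.sum_univ_castSucc (f := μ)]; omega
      have h2 : ∑ a : Fin (m' + 1), (if (a : ℕ) = m' then μ (Fin.last (m' + 1)) else 0)
          = μ (Fin.last (m' + 1)) := by
        rw [Fin.sum_univ_castSucc
          (f := fun a : Fin (m' + 1) => if (a : ℕ) = m' then μ (Fin.last (m' + 1)) else 0)]
        rw [Finset.sum_eq_zero, zero_add, if_pos (by simp)]
        intro x _
        have := x.isLt
        simp only [Fin.coe_castSucc]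
        rw [if_neg (by omega)]
      rw [h1, h2, hsum]
      omega
    have hνblock : ∀ a : Fin (m' + 1), blockStart ν a = blockStart μ a.castSucc := by
      intro a
      rw [blockStart_eq_sum_ite, blockStart_eq_sum_ite, Fin.sum_univ_castSucc
        (f := fun b => if b < a.castSucc then μ b else 0)]
      have hlast : ¬ (Fin.last (m' + 1) < a.castSucc) := by
        rw [Fin.lt_def, Fin.val_last, Fin.coe_castSucc]
        have := a.isLt; omega
      rw [if_neg hlast, add_zero]
      apply Finset.sum_congr rfl
      intro b _
      have hiff : b < a ↔ b.castSucc < a.castSucc := by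
        rw [Fin.lt_def, Fin.lt_def, Fin.coe_castSucc, Fin.coe_castSucc]
      by_cases hb : b < a
      · rw [if_pos hb, if_pos (hiff.mp hb), hν]
        have hbm : (b : ℕ) < m' := by
          have h1 : (b : ℕ) < (a : ℕ) := hb
          have h2 : (a : ℕ) ≤ m' := by have := a.isLt; omega
          omega
        rw [if_neg (by omega), add_zero]
      · rw [if_neg hb, if_neg (fun h => hb (hiff.mpr h))]
    have hνadm : IsAdmissibleShape s ν := by
      have main : ∀ a : Fin (m' + 1), ∀ i j : Fin (n + 1),
          blockStart ν a ≤ (i : ℕ) → (i : ℕ) ≤ (j : ℕ) →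
          (j : ℕ) < blockStart ν a + ν a → s i j = 0 := by
        intro a i j hi hij hj
        by_cases ha : (a : ℕ) < m'
        · -- unchanged block
          have hν_a : ν a = μ a.castSucc := by rw [hν, if_neg (by omega), add_zero]
          rw [hνblock] at hi hj
          rw [hν_a] at hj
          exact hadm a.castSucc i j hi (by omega) (by omega) (by omega)
        · -- merged block
          have haval : (a : ℕ) = m' := by have := a.isLt; omega
          have hcast : a.castSucc = p := Fin.ext (by rw [Fin.coe_castSucc]; omega)
          have hν_a : ν a = μ p + μ (Fin.last (m' + 1)) := by
            rw [hν, if_pos haval, hcast]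
          rw [hνblock, hcast] at hi hj
          rw [hν_a] at hj
          have hjn : (j : ℕ) < n + 1 := j.isLt
          rcases lt_or_ge (j : ℕ) K with hjK | hjK
          · -- both in block p
            exact hadm p i j hi (by omega) (by omega) (by omega)
          rcases le_or_gt K (i : ℕ) with hiK | hiK
          · -- both in last block
            exact hadm (Fin.last (m' + 1)) i j (by omega) (by omega) (by omega) (by omega)
          · -- crossing: use s P Q = 0
            have h1 := chain i P j (by omega) (by omega)
            have h2 := chain P Q j (by omega) (by omega)
            have hiP : s i P = 0 :=
              hadm p i P hi (by omega) (by omega) (by omega)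
            have hQj : s Q j = 0 :=
              hadm (Fin.last (m' + 1)) Q j (by omega) (by omega) (by omega) (by omega)
            omega
      intro a i j hi1 hi2 hj1 hj2
      rcases le_total (i : ℕ) (j : ℕ) with h | h
      · exact main a i j hi1 h hj2
      · rw [hsymm i j]; exact main a j i hj1 h hi2
    have := hmin (m' + 1) ν hνpos hνsum hνadm
    omega
  refine ⟨?_, ?_, ?_, ?_⟩
  · -- nonnegativity
    intro i j
    rw [hds i j]
    split_ifs with h
    · rcases h with ⟨h1, h2⟩ | ⟨h1, h2⟩
      · have := key i j h1 h2; omega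
      · have := key j i h1 h2; rw [hsymm i j]; omega
    · omega
  · -- shift matrix
    intro i j k habs
    have hb := between_of_abs (i : ℕ) (j : ℕ) (k : ℕ) habs
    have hs := hshift i j k habs
    rw [hds i j, hds j k, hds i k]
    split_ifs <;> omega
  · -- symmetry
    intro i j
    rw [hds i j, hds j i, hsymm i j]
    split_ifs <;> omega
  · -- admissibility
    intro a i j hi1 hi2 hj1 hj2
    have h0 := hadm a i j hi1 hi2 hj1 hj2
    rw [hds i j, h0]
    by_cases ha : a = Fin.last (m' + 1)
    · subst ha
      rw [hlastK] at hi1 hj1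
      split_ifs <;> omega
    · have halt : a < Fin.last (m' + 1) := by
        have h1 := a.isLt
        rw [Fin.lt_def, Fin.val_last]
        rcases Nat.lt_or_ge (a : ℕ) (m' + 1) with h | h
        · exact h
        · exact absurd (Fin.ext (by omega)) ha
      have hble := blockStart_add_le μ a (Fin.last (m' + 1)) halt
      rw [hlastK] at hble
      split_ifs <;> omega
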